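/- Let t₀ < t_f be real numbers, let ε > 0 with ε ≤ t_f − t₀, and let d ≥ 1 be an integer. There exists an open dense subset T of (ℂ^{d×d})³ such that for every triple (c₋₁, c₀, c₁) ∈ T and every function g : ℝ → ℂ^d there exists a unique function f : ℝ → ℂ^d satisfying: f(t) = g(t) for all t ∈ [t₀, t_f], f(t) = 0 for all t ∉ [t₀−ε, t_f+ε], and there exists u : ℝ → ℂ^d with □u = f. Moreover, for this f, any two functions u, v : ℝ → ℂ^d with □u = f and □v = f coincide on [t₀, t_f]. -/

import Mathlib

open Matrix

/-- The indicator function of the closed interval `[t₀, t_f]`. -/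
noncomputable def chi (t₀ t_f : ℝ) : ℝ → ℝ :=
  Set.indicator (Set.Icc t₀ t_f) (fun _ => (1 : ℝ))

/-- The operator `□` in the case `N = 1`:
`(□u)(t) = Σ_{k=−1}^{1} χ(t+kε) · (c_k ⬝ u(t+kε))`. -/
noncomputable def box1 {d : ℕ} (t₀ t_f ε : ℝ)
    (cm c0 c1 : Matrix (Fin d) (Fin d) ℂ) (u : ℝ → Fin d → ℂ) : ℝ → Fin d → ℂ :=
  fun t =>
    chi t₀ t_f (t - ε) • cm.mulVec (u (t - ε))
      + chi t₀ t_f t • c0.mulVec (u t)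
      + chi t₀ t_f (t + ε) • c1.mulVec (u (t + ε))

open Topology

noncomputable def trid (d n : ℕ) (a b c : Matrix (Fin d) (Fin d) ℂ) :
    Matrix (Fin n × Fin d) (Fin n × Fin d) ℂ :=
  fun p q =>
    if (p.1 : ℕ) = q.1 then b p.2 q.2
    else if (p.1 : ℕ) + 1 = q.1 then c p.2 q.2
    else if (q.1 : ℕ) + 1 = p.1 then a p.2 q.2 else 0

lemma sum_ite_coe {n : ℕ} (X : Fin n → ℂ) (m : ℕ) :
    (∑ i : Fin n, if (i : ℕ) = m then X i else 0) = if h : m < n then X ⟨m, h⟩ else 0 := by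
  by_cases h : m < n
  · rw [dif_pos h, Finset.sum_eq_single (⟨m, h⟩ : Fin n)]
    · simp
    · intro i _ hne
      rw [if_neg]; intro hc; exact hne (Fin.ext hc)
    · simp
  · rw [dif_neg h, Finset.sum_eq_zero]
    intro i _
    rw [if_neg]; intro hc; exact h (hc ▸ i.isLt)

lemma trid_mulVec (d n : ℕ) (a b c : Matrix (Fin d) (Fin d) ℂ)
    (v : Fin n × Fin d → ℂ) (j : Fin n) (p : Fin d) :
    (trid d n a b c).mulVec v (j, p) =
      (if h : 0 < (j : ℕ) then a.mulVec (fun q => v (⟨(j : ℕ) - 1, by omega⟩, q)) p else 0)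
      + b.mulVec (fun q => v (j, q)) p
      + (if h : (j : ℕ) + 1 < n then c.mulVec (fun q => v (⟨(j : ℕ) + 1, h⟩, q)) p else 0) := by
  have key : ∀ (i : Fin n) (q : Fin d),
      trid d n a b c (j, p) (i, q) * v (i, q) =
        (if (i : ℕ) = (j : ℕ) then b p q * v (i, q) else 0)
        + (if (i : ℕ) = (j : ℕ) + 1 then c p q * v (i, q) else 0)
        + (if (i : ℕ) + 1 = (j : ℕ) then a p q * v (i, q) else 0) := by
    intro i q
    unfold trid
    dsimp only
    split_ifs <;> first | ring1 | (exfalso; omega)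
  have pull : ∀ (P : Fin n → Prop) (_ : DecidablePred P) (X : Fin n → Fin d → ℂ),
      (∑ i : Fin n, ∑ q : Fin d, if P i then X i q else 0)
        = ∑ i : Fin n, if P i then ∑ q : Fin d, X i q else 0 := by
    intro P _ X
    refine Finset.sum_congr rfl fun i _ => ?_
    split_ifs <;> simp
  have hb : (∑ i : Fin n, ∑ q : Fin d, if (i : ℕ) = (j : ℕ) then b p q * v (i, q) else 0)
      = b.mulVec (fun q => v (j, q)) p := by
    rw [pull (fun i => (i : ℕ) = (j : ℕ)) (fun i => instDecidableEqNat _ _) (fun i q => b p q * v (i, q)),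
      sum_ite_coe (fun i => ∑ q : Fin d, b p q * v (i, q)) (j : ℕ), dif_pos j.isLt]
    simp [Matrix.mulVec, dotProduct]
  have hc : (∑ i : Fin n, ∑ q : Fin d, if (i : ℕ) = (j : ℕ) + 1 then c p q * v (i, q) else 0)
      = (if h : (j : ℕ) + 1 < n then c.mulVec (fun q => v (⟨(j : ℕ) + 1, h⟩, q)) p else 0) := by
    rw [pull (fun i => (i : ℕ) = (j : ℕ) + 1) (fun i => instDecidableEqNat _ _) (fun i q => c p q * v (i, q)),
      sum_ite_coe (fun i => ∑ q : Fin d, c p q * v (i, q)) ((j : ℕ) + 1)]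
    by_cases h : (j : ℕ) + 1 < n <;> simp [h, Matrix.mulVec, dotProduct]
  have ha : (∑ i : Fin n, ∑ q : Fin d, if (i : ℕ) + 1 = (j : ℕ) then a p q * v (i, q) else 0)
      = (if h : 0 < (j : ℕ) then
          a.mulVec (fun q => v (⟨(j : ℕ) - 1, by omega⟩, q)) p else 0) := by
    by_cases hj : 0 < (j : ℕ)
    · have hcong : ∀ i : Fin n, ∀ q : Fin d,
          (if (i : ℕ) + 1 = (j : ℕ) then a p q * v (i, q) else 0)
            = (if (i : ℕ) = (j : ℕ) - 1 then a p q * v (i, q) else 0) := by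
        intro i q
        refine if_congr ?_ rfl rfl
        omega
      simp only [hcong]
      rw [pull (fun i => (i : ℕ) = (j : ℕ) - 1) (fun i => instDecidableEqNat _ _) (fun i q => a p q * v (i, q)),
        sum_ite_coe (fun i => ∑ q : Fin d, a p q * v (i, q)) ((j : ℕ) - 1),
        dif_pos (show (j : ℕ) - 1 < n by omega), dif_pos hj]
      simp [Matrix.mulVec, dotProduct]
    · rw [dif_neg hj, Finset.sum_eq_zero]
      intro i _
      rw [Finset.sum_eq_zero]
      intro q _
      rw [if_neg]
      omega
  rw [Matrix.mulVec, dotProduct, Fintype.sum_prod_type]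
  simp only [key, Finset.sum_add_distrib]
  rw [hb, hc, ha]
  ring1

/-! ### Grid machinery -/

noncomputable def gidx (t₀ ε t : ℝ) : ℕ := (⌊(t - t₀) / ε⌋).toNat

noncomputable def gbase (t₀ ε t : ℝ) : ℝ := t - ⌊(t - t₀) / ε⌋ * ε

noncomputable def gN (t_f ε s : ℝ) : ℕ := (⌊(t_f - s) / ε⌋).toNat + 1

lemma gbase_mem {t₀ ε : ℝ} (hε : 0 < ε) (t : ℝ) :
    gbase t₀ ε t ∈ Set.Ico t₀ (t₀ + ε) := by
  unfold gbase
  have hx : (t - t₀) / ε * ε = t - t₀ := div_mul_cancel₀ _ (ne_of_gt hε)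
  have h1 : (⌊(t - t₀) / ε⌋ : ℝ) ≤ (t - t₀) / ε := Int.floor_le _
  have h2 : (t - t₀) / ε < ⌊(t - t₀) / ε⌋ + 1 := Int.lt_floor_add_one _
  constructor <;> nlinarith

lemma gbase_add {t₀ ε : ℝ} (hε : 0 < ε) {t : ℝ} (h : t₀ ≤ t) :
    gbase t₀ ε t + (gidx t₀ ε t : ℝ) * ε = t := by
  unfold gbase gidx
  have h0 : 0 ≤ ⌊(t - t₀) / ε⌋ := Int.floor_nonneg.mpr (div_nonneg (by linarith) hε.le)
  have : ((⌊(t - t₀) / ε⌋.toNat : ℕ) : ℝ) = ((⌊(t - t₀) / ε⌋ : ℤ) : ℝ) := by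
    exact_mod_cast congrArg (fun z : ℤ => (z : ℝ)) (Int.toNat_of_nonneg h0)
  rw [this]; ring

lemma gbase_shift {t₀ ε : ℝ} (hε : 0 < ε) {s : ℝ} (hs : s ∈ Set.Ico t₀ (t₀ + ε)) (i : ℕ) :
    gbase t₀ ε (s + i * ε) = s ∧ gidx t₀ ε (s + i * ε) = i := by
  have hdiv : (s + i * ε - t₀) / ε = (s - t₀) / ε + i := by
    field_simp
    ring
  have h0 : ⌊(s - t₀) / ε⌋ = 0 := by
    rw [Int.floor_eq_zero_iff]
    constructor
    · exact div_nonneg (by linarith [hs.1]) hε.le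
    · rw [div_lt_one hε]; linarith [hs.2]
  have hfl : ⌊(s + i * ε - t₀) / ε⌋ = i := by
    rw [hdiv, Int.floor_add_natCast, h0, zero_add]
  constructor
  · unfold gbase; rw [hfl]; push_cast; ring
  · unfold gidx; rw [hfl]; simp

lemma mem_chain_iff {t₀ t_f ε : ℝ} (hε : 0 < ε) (hεle : ε ≤ t_f - t₀)
    {s : ℝ} (hs : s ∈ Set.Ico t₀ (t₀ + ε)) (i : ℕ) :
    s + i * ε ∈ Set.Icc t₀ t_f ↔ i < gN t_f ε s := by
  have hsle : s ≤ t_f := by linarith [hs.2]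
  have h0 : 0 ≤ ⌊(t_f - s) / ε⌋ := Int.floor_nonneg.mpr (div_nonneg (by linarith) hε.le)
  constructor
  · rintro ⟨-, h2⟩
    have hr : (i : ℝ) ≤ (t_f - s) / ε := by rw [le_div_iff₀ hε]; linarith
    have hz : (i : ℤ) ≤ ⌊(t_f - s) / ε⌋ := Int.le_floor.mpr (by exact_mod_cast hr)
    unfold gN; omega
  · intro hi
    unfold gN at hi
    have hz : (i : ℤ) ≤ ⌊(t_f - s) / ε⌋ := by omega
    have hr : (i : ℝ) ≤ (t_f - s) / ε := le_trans (by exact_mod_cast hz) (Int.floor_le _)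
    rw [le_div_iff₀ hε] at hr
    constructor
    · have : (0:ℝ) ≤ i * ε := by positivity
      linarith [hs.1]
    · linarith

lemma gN_le {t₀ t_f ε : ℝ} (hε : 0 < ε) {s : ℝ} (hs : t₀ ≤ s) :
    gN t_f ε s ≤ gN t_f ε t₀ := by
  unfold gN
  have hle : (t_f - s) / ε ≤ (t_f - t₀) / ε := by gcongr <;> linarith
  have := Int.floor_le_floor hle
  omega

/-! ### The chain form of `box1` -/

lemma box_chain {d : ℕ} (t₀ t_f ε : ℝ) (hε : 0 < ε) (hεle : ε ≤ t_f - t₀)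
    (a b c : Matrix (Fin d) (Fin d) ℂ) (u : ℝ → Fin d → ℂ)
    {s : ℝ} (hs : s ∈ Set.Ico t₀ (t₀ + ε)) {j : ℕ} (hj : j < gN t_f ε s) (p : Fin d) :
    box1 t₀ t_f ε a b c u (s + j * ε) p
      = (trid d (gN t_f ε s) a b c).mulVec
          (fun iq => u (s + (iq.1 : ℕ) * ε) iq.2) (⟨j, hj⟩, p) := by
  rw [trid_mulVec]
  unfold box1 chi
  simp only [Pi.add_apply, Pi.smul_apply]
  have e1 : s + (j : ℝ) * ε + ε = s + ((j + 1 : ℕ) : ℝ) * ε := by push_cast; ring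
  have hmid : Set.indicator (Set.Icc t₀ t_f) (fun _ => (1:ℝ)) (s + j * ε) = 1 :=
    Set.indicator_of_mem ((mem_chain_iff hε hεle hs j).mpr hj) _
  -- plus term
  have hplus : Set.indicator (Set.Icc t₀ t_f) (fun _ => (1:ℝ)) (s + j * ε + ε)
        • (c.mulVec (u (s + j * ε + ε))) p
      = (if h : j + 1 < gN t_f ε s then
          c.mulVec (fun q => u (s + ((j + 1 : ℕ) : ℝ) * ε) q) p else 0) := by
    by_cases h : j + 1 < gN t_f ε s
    · rw [dif_pos h, e1, Set.indicator_of_mem ((mem_chain_iff hε hεle hs (j+1)).mpr h)]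
      norm_num
    · rw [dif_neg h, e1,
        Set.indicator_of_notMem (fun hm => h ((mem_chain_iff hε hεle hs (j+1)).mp hm))]
      norm_num
  -- minus term
  have hminus : Set.indicator (Set.Icc t₀ t_f) (fun _ => (1:ℝ)) (s + j * ε - ε)
        • (a.mulVec (u (s + j * ε - ε))) p
      = (if h : 0 < j then
          a.mulVec (fun q => u (s + ((j - 1 : ℕ) : ℝ) * ε) q) p else 0) := by
    by_cases h : 0 < j
    · have e2 : s + (j : ℝ) * ε - ε = s + ((j - 1 : ℕ) : ℝ) * ε := by
        have : ((j - 1 : ℕ) : ℝ) = (j : ℝ) - 1 := by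
          have : (1:ℕ) ≤ j := h
          push_cast [Nat.cast_sub this]
          ring
        rw [this]; ring
      rw [dif_pos h, e2,
        Set.indicator_of_mem ((mem_chain_iff hε hεle hs (j-1)).mpr (by omega))]
      norm_num
    · have hj0 : j = 0 := by omega
      subst hj0
      have hnm : s + (0:ℕ) * ε - ε ∉ Set.Icc t₀ t_f := by
        intro hm
        have := hm.1
        simp only [Nat.cast_zero, zero_mul, add_zero] at this
        linarith [hs.2]
      rw [dif_neg h, Set.indicator_of_notMem hnm]
      norm_num
  rw [hmid, hplus, hminus, one_smul]

/-! ### The canonical solution -/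

noncomputable def chainG {d : ℕ} (ε : ℝ) (g : ℝ → Fin d → ℂ) (s : ℝ) (n : ℕ) :
    Fin n × Fin d → ℂ := fun iq => g (s + (iq.1 : ℕ) * ε) iq.2

noncomputable def solfun {d : ℕ} (t_f ε : ℝ) (a b c : Matrix (Fin d) (Fin d) ℂ)
    (g : ℝ → Fin d → ℂ) (s : ℝ) (i : ℕ) : Fin d → ℂ :=
  if h : i < gN t_f ε s then
    fun p => (trid d (gN t_f ε s) a b c)⁻¹.mulVec (chainG ε g s _) (⟨i, h⟩, p)
  else 0

noncomputable def usol {d : ℕ} (t₀ t_f ε : ℝ) (a b c : Matrix (Fin d) (Fin d) ℂ)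
    (g : ℝ → Fin d → ℂ) (t : ℝ) : Fin d → ℂ :=
  solfun t_f ε a b c g (gbase t₀ ε t) (gidx t₀ ε t)

lemma usol_eq {d : ℕ} (t₀ t_f ε : ℝ) (hε : 0 < ε) (a b c : Matrix (Fin d) (Fin d) ℂ)
    (g : ℝ → Fin d → ℂ) {s : ℝ} (hs : s ∈ Set.Ico t₀ (t₀ + ε)) {i : ℕ}
    (hi : i < gN t_f ε s) :
    usol t₀ t_f ε a b c g (s + i * ε)
      = fun p => (trid d (gN t_f ε s) a b c)⁻¹.mulVec (chainG ε g s _) (⟨i, hi⟩, p) := by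
  obtain ⟨h1, h2⟩ := gbase_shift hε hs i
  unfold usol
  rw [h1, h2]
  unfold solfun
  rw [dif_pos hi]

/-- `box1` only depends on the values of `u` on `[t₀, t_f]`. -/
lemma box1_congr {d : ℕ} (t₀ t_f ε : ℝ) (a b c : Matrix (Fin d) (Fin d) ℂ)
    (u v : ℝ → Fin d → ℂ) (huv : ∀ t ∈ Set.Icc t₀ t_f, u t = v t) :
    box1 t₀ t_f ε a b c u = box1 t₀ t_f ε a b c v := by
  funext t
  unfold box1 chi
  have key : ∀ (m : Matrix (Fin d) (Fin d) ℂ) (x : ℝ),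
      Set.indicator (Set.Icc t₀ t_f) (fun _ => (1:ℝ)) x • m.mulVec (u x)
        = Set.indicator (Set.Icc t₀ t_f) (fun _ => (1:ℝ)) x • m.mulVec (v x) := by
    intro m x
    by_cases h : x ∈ Set.Icc t₀ t_f
    · rw [huv x h]
    · rw [Set.indicator_of_notMem h, zero_smul, zero_smul]
  rw [key, key, key]

lemma trid_add_smul (d n : ℕ) (a b c : Matrix (Fin d) (Fin d) ℂ) (z : ℂ) :
    trid d n a (b + z • 1) c = trid d n a b c + z • 1 := by
  ext ⟨j, p⟩ ⟨i, q⟩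
  rw [Matrix.add_apply]
  unfold trid
  simp only [Matrix.add_apply, Matrix.smul_apply, Matrix.one_apply, smul_eq_mul,
    Prod.mk.injEq]
  by_cases h : (j : ℕ) = (i : ℕ)
  · have hji : j = i := Fin.ext h
    subst hji
    by_cases hpq : p = q
    · subst hpq
      simp [h]
    · simp [h, hpq]
  · have hne : ¬(j = i ∧ p = q) := fun hc => h (congrArg Fin.val hc.1)
    simp [h, hne, Fin.ext_iff]

/-- characterization of the range of `□` for `N = 1`, for a generic
(open dense) set of triples `(c₋₁, c₀, c₁)`. -/
theorem stmt1 (t₀ t_f ε : ℝ) (ht : t₀ < t_f) (hε : 0 < ε) (hεle : ε ≤ t_f - t₀)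
    (d : ℕ) (hd : 1 ≤ d) :
    ∃ T : Set ((Matrix (Fin d) (Fin d) ℂ) × (Matrix (Fin d) (Fin d) ℂ) ×
        (Matrix (Fin d) (Fin d) ℂ)),
      IsOpen T ∧ Dense T ∧
      ∀ cm c0 c1 : Matrix (Fin d) (Fin d) ℂ, (cm, c0, c1) ∈ T →
        ∀ g : ℝ → Fin d → ℂ,
          (∃! f : ℝ → Fin d → ℂ,
            (∀ t ∈ Set.Icc t₀ t_f, f t = g t) ∧
            (∀ t ∉ Set.Icc (t₀ - ε) (t_f + ε), f t = 0) ∧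
            (∃ u : ℝ → Fin d → ℂ, box1 t₀ t_f ε cm c0 c1 u = f)) ∧
          (∀ f : ℝ → Fin d → ℂ,
            ((∀ t ∈ Set.Icc t₀ t_f, f t = g t) ∧
             (∀ t ∉ Set.Icc (t₀ - ε) (t_f + ε), f t = 0) ∧
             (∃ u : ℝ → Fin d → ℂ, box1 t₀ t_f ε cm c0 c1 u = f)) →
            ∀ u v : ℝ → Fin d → ℂ,
              box1 t₀ t_f ε cm c0 c1 u = f → box1 t₀ t_f ε cm c0 c1 v = f →
              ∀ t ∈ Set.Icc t₀ t_f, u t = v t) := by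
  classical
  set N₀ := gN t_f ε t₀ with hN₀
  refine ⟨{x | ∀ n ∈ Finset.range (N₀ + 1), (trid d n x.1 x.2.1 x.2.2).det ≠ 0},
    ?_, ?_, ?_⟩
  · -- open
    have hset : {x : (Matrix (Fin d) (Fin d) ℂ) × (Matrix (Fin d) (Fin d) ℂ) ×
          (Matrix (Fin d) (Fin d) ℂ) |
          ∀ n ∈ Finset.range (N₀ + 1), (trid d n x.1 x.2.1 x.2.2).det ≠ 0}
        = ⋂ n ∈ Finset.range (N₀ + 1), {x | (trid d n x.1 x.2.1 x.2.2).det ≠ 0} := by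
      ext x; simp
    rw [hset]
    apply isOpen_biInter_finset
    intro n _
    have hcont : Continuous fun x : (Matrix (Fin d) (Fin d) ℂ) × (Matrix (Fin d) (Fin d) ℂ) ×
        (Matrix (Fin d) (Fin d) ℂ) => (trid d n x.1 x.2.1 x.2.2).det := by
      apply Continuous.matrix_det
      apply continuous_matrix
      intro iq jq
      unfold trid
      split_ifs
      · exact (continuous_fst.comp continuous_snd).matrix_elem _ _
      · exact (continuous_snd.comp continuous_snd).matrix_elem _ _
      · exact continuous_fst.matrix_elem _ _
      · exact continuous_const
    exact isOpen_compl_singleton.preimage hcont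
  · -- dense
    rintro ⟨a, b, c⟩
    rw [mem_closure_iff_nhds]
    intro U hU
    set φ : ℂ → (Matrix (Fin d) (Fin d) ℂ) × (Matrix (Fin d) (Fin d) ℂ) ×
        (Matrix (Fin d) (Fin d) ℂ) := fun z => (a, b + z • 1, c) with hφdef
    have hφc : Continuous φ := by
      refine continuous_const.prodMk (Continuous.prodMk ?_ continuous_const)
      exact continuous_const.add (continuous_id.smul continuous_const)
    have hφ0 : φ 0 = (a, b, c) := by simp [hφdef]
    have hV : φ ⁻¹' U ∈ 𝓝 (0 : ℂ) := hφc.continuousAt.preimage_mem_nhds (hφ0 ▸ hU)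
    have hVinf : (φ ⁻¹' U).Infinite := infinite_of_mem_nhds 0 hV
    have hbadfin : (⋃ n ∈ Finset.range (N₀ + 1),
        {z : ℂ | (trid d n a (b + z • 1) c).det = 0}).Finite := by
      refine Set.Finite.biUnion (Finset.range (N₀ + 1)).finite_toSet fun n _ => ?_
      refine (Matrix.finite_spectrum (-(trid d n a b c))).subset ?_
      intro z hz
      simp only [Set.mem_setOf_eq] at hz
      rw [spectrum.mem_iff, sub_neg_eq_add, Algebra.algebraMap_eq_smul_one]
      have hrw : z • (1 : Matrix (Fin n × Fin d) (Fin n × Fin d) ℂ) + trid d n a b c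
          = trid d n a (b + z • 1) c := by
        rw [trid_add_smul]; abel
      rw [hrw]
      intro hu
      rw [Matrix.isUnit_iff_isUnit_det, hz] at hu
      exact (not_isUnit_zero : ¬IsUnit (0 : ℂ)) hu
    obtain ⟨z, hzU, hzB⟩ := hVinf.exists_notMem_finite hbadfin
    refine ⟨φ z, hzU, ?_⟩
    intro n hn hdet
    exact hzB (Set.mem_biUnion hn hdet)
  · -- main statement
    rintro a b c hT g
    have hdet : ∀ s ∈ Set.Ico t₀ (t₀ + ε), IsUnit (trid d (gN t_f ε s) a b c).det := by
      intro s hs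
      refine isUnit_iff_ne_zero.mpr (hT _ (Finset.mem_range.mpr ?_))
      have := gN_le (t_f := t_f) hε hs.1
      omega
    set u₀ : ℝ → Fin d → ℂ := usol t₀ t_f ε a b c g with hu₀
    have hchain₀ : ∀ s ∈ Set.Ico t₀ (t₀ + ε),
        (fun iq : Fin (gN t_f ε s) × Fin d => u₀ (s + (iq.1 : ℕ) * ε) iq.2)
          = (trid d (gN t_f ε s) a b c)⁻¹.mulVec (chainG ε g s _) := by
      intro s hs
      funext iq
      obtain ⟨i, q⟩ := iq
      have h := usol_eq t₀ t_f ε hε a b c g hs (i := (i : ℕ)) i.isLt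
      rw [hu₀]
      exact congrFun h q
    have hsolve : ∀ (u' F : ℝ → Fin d → ℂ),
        box1 t₀ t_f ε a b c u' = F → (∀ t ∈ Set.Icc t₀ t_f, F t = g t) →
        ∀ s ∈ Set.Ico t₀ (t₀ + ε),
        (fun iq : Fin (gN t_f ε s) × Fin d => u' (s + (iq.1 : ℕ) * ε) iq.2)
          = (trid d (gN t_f ε s) a b c)⁻¹.mulVec (chainG ε g s _) := by
      intro u' F hF hFg s hs
      have hsys : (trid d (gN t_f ε s) a b c).mulVec
          (fun iq => u' (s + (iq.1 : ℕ) * ε) iq.2) = chainG ε g s _ := by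
        funext jq
        obtain ⟨j, p⟩ := jq
        have hbc := box_chain t₀ t_f ε hε hεle a b c u' hs j.isLt p
        rw [show (⟨(j : ℕ), j.isLt⟩ : Fin (gN t_f ε s)) = j from rfl] at hbc
        rw [← hbc, hF]
        unfold chainG
        exact congrFun (hFg _ ((mem_chain_iff hε hεle hs j).mpr j.isLt)) p
      have h1 : (trid d (gN t_f ε s) a b c)⁻¹.mulVec ((trid d (gN t_f ε s) a b c).mulVec
            (fun iq => u' (s + (iq.1 : ℕ) * ε) iq.2))
          = (fun iq : Fin (gN t_f ε s) × Fin d => u' (s + (iq.1 : ℕ) * ε) iq.2) := by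
        rw [Matrix.mulVec_mulVec, Matrix.nonsing_inv_mul _ (hdet s hs), Matrix.one_mulVec]
      rw [← h1, hsys]
    have hueq : ∀ (u' F : ℝ → Fin d → ℂ), box1 t₀ t_f ε a b c u' = F →
        (∀ t ∈ Set.Icc t₀ t_f, F t = g t) → ∀ t ∈ Set.Icc t₀ t_f, u' t = u₀ t := by
      intro u' F hF hFg t htm
      have hs := gbase_mem (t₀ := t₀) hε t
      have hadd := gbase_add (t₀ := t₀) hε htm.1
      have hidx : gidx t₀ ε t < gN t_f ε (gbase t₀ ε t) :=
        (mem_chain_iff hε hεle hs _).mp (by rw [hadd]; exact htm)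
      have h1 := congrFun (hsolve u' F hF hFg (gbase t₀ ε t) hs)
      have h2 := congrFun (hchain₀ (gbase t₀ ε t) hs)
      funext p
      have e1 := h1 (⟨gidx t₀ ε t, hidx⟩, p)
      have e2 := h2 (⟨gidx t₀ ε t, hidx⟩, p)
      simp only at e1 e2
      rw [hadd] at e1 e2
      exact e1.trans e2.symm
    set f₀ := box1 t₀ t_f ε a b c u₀ with hf₀
    have P1 : ∀ t ∈ Set.Icc t₀ t_f, f₀ t = g t := by
      intro t htm
      have hs := gbase_mem (t₀ := t₀) hε t
      have hadd := gbase_add (t₀ := t₀) hε htm.1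
      have hidx : gidx t₀ ε t < gN t_f ε (gbase t₀ ε t) :=
        (mem_chain_iff hε hεle hs _).mp (by rw [hadd]; exact htm)
      funext p
      rw [hf₀, ← hadd]
      rw [box_chain t₀ t_f ε hε hεle a b c u₀ hs hidx p]
      rw [hchain₀ _ hs, Matrix.mulVec_mulVec, Matrix.mul_nonsing_inv _ (hdet _ hs),
        Matrix.one_mulVec]
      rfl
    have P2 : ∀ t ∉ Set.Icc (t₀ - ε) (t_f + ε), f₀ t = 0 := by
      intro t htm
      rw [Set.mem_Icc, not_and_or] at htm
      have h1 : t - ε ∉ Set.Icc t₀ t_f := by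
        intro hm; rcases htm with h | h <;> push_neg at h
        · linarith [hm.1]
        · linarith [hm.2]
      have h2 : t ∉ Set.Icc t₀ t_f := by
        intro hm; rcases htm with h | h <;> push_neg at h
        · linarith [hm.1]
        · linarith [hm.2]
      have h3 : t + ε ∉ Set.Icc t₀ t_f := by
        intro hm; rcases htm with h | h <;> push_neg at h
        · linarith [hm.1]
        · linarith [hm.2]
      rw [hf₀]
      unfold box1 chi
      rw [Set.indicator_of_notMem h1, Set.indicator_of_notMem h2,
        Set.indicator_of_notMem h3]
      simp
    refine ⟨⟨f₀, ⟨P1, P2, ⟨u₀, hf₀.symm⟩⟩, ?_⟩, ?_⟩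
    · rintro f' ⟨hP1, hP2, u', hu'⟩
      rw [← hu', hf₀]
      exact box1_congr t₀ t_f ε a b c u' u₀ (hueq u' f' hu' hP1)
    · rintro f ⟨hQ1, hQ2, -⟩ u v hu hv t htm
      rw [hueq u f hu hQ1 t htm, hueq v f hv hQ1 t htm]
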